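/- arXiv:2504.16863 — 3 statements merged into one kernel-verified Lean document; each statement's English description precedes it below -/
import Mathlib

section
/- For every graph G, the maximum degree of the quotient G̃ of G by the true-twin relation satisfies Δ(G̃) ≤ cideg(G) · (ω̃(G) − 1), where cideg(G) is the maximum number of maximal cliques of G containing a single vertex, and ω̃(G) is the maximum number of true-twin classes intersecting a single maximal clique. -/
variable {V : Type} {W : Type}

/-- Two vertices are true twins: they have the same closed neighbourhood. -/
def twin (G : SimpleGraph V) (x y : V) : Prop :=
  ∀ z, (G.Adj x z ∨ x = z) ↔ (G.Adj y z ∨ y = z)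

/-- The true-twin relation as a setoid. -/
def twinSetoid (G : SimpleGraph V) : Setoid V :=
  ⟨twin G, ⟨fun _ _ => Iff.rfl, fun h z => (h z).symm, fun h1 h2 z => (h1 z).trans (h2 z)⟩⟩

/-- The quotient of `G` by the true-twin relation. -/
def quotGraph (G : SimpleGraph V) : SimpleGraph (Quotient (twinSetoid G)) where
  Adj a b := a ≠ b ∧ ∃ x y, Quotient.mk (twinSetoid G) x = a ∧
    Quotient.mk (twinSetoid G) y = b ∧ G.Adj x y
  symm := by
    constructor
    rintro a b ⟨h, x, y, hx, hy, hxy⟩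
    exact ⟨h.symm, y, x, hy, hx, hxy.symm⟩
  loopless := by constructor; rintro a ⟨h, _⟩; exact h rfl

/-- The true-twin class of a vertex. -/
def qmk (G : SimpleGraph V) (v : V) : Quotient (twinSetoid G) :=
  Quotient.mk (twinSetoid G) v

/-- `K` is a maximal clique of `G`. -/
def MaxClique (G : SimpleGraph V) (K : Set V) : Prop :=
  G.IsClique K ∧ ∀ K', G.IsClique K' → K ⊆ K' → K' = K

/-- `S` is an independent set of `G`. -/
def IndepSet (G : SimpleGraph V) (S : Set V) : Prop :=
  ∀ x ∈ S, ∀ y ∈ S, ¬ G.Adj x y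

/-- Independence number. -/
noncomputable def indepNum (G : SimpleGraph V) : ℕ :=
  sSup {n | ∃ S : Set V, IndepSet G S ∧ S.ncard = n}

/-- Clique cover number: minimum number of cliques covering all vertices. -/
noncomputable def cliqueCoverNum (G : SimpleGraph V) : ℕ :=
  sInf {n | ∃ f : Fin n → Set V, (∀ i, G.IsClique (f i)) ∧ ∀ v, ∃ i, v ∈ f i}

/-- Closed neighbourhood. -/
def cNbhd (G : SimpleGraph V) (v : V) : Set V := insert v (G.neighborSet v)

/-- Local independence number. -/
noncomputable def alphaLoc (G : SimpleGraph V) : ℕ :=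
  sSup {n | ∃ v, ∃ S ⊆ cNbhd G v, IndepSet G S ∧ S.ncard = n}

/-- Local clique cover number. -/
noncomputable def thetaLoc (G : SimpleGraph V) : ℕ :=
  sSup {n | ∃ v, cliqueCoverNum (G.induce (cNbhd G v)) = n}

/-- Clique-incidence-degree: max number of maximal cliques containing a vertex. -/
noncomputable def cideg (G : SimpleGraph V) : ℕ :=
  sSup {n | ∃ v, {K | MaxClique G K ∧ v ∈ K}.ncard = n}

/-- Clique-incidence-diversity: max number of true-twin classes meeting a maximal clique. -/
noncomputable def cliqueIncDiv (G : SimpleGraph V) : ℕ :=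
  sSup {n | ∃ K, MaxClique G K ∧ (qmk G '' K).ncard = n}

/-- Clique-degree: max number of other maximal cliques intersecting a maximal clique. -/
noncomputable def cdeg (G : SimpleGraph V) : ℕ :=
  sSup {n | ∃ K, MaxClique G K ∧ {K' | MaxClique G K' ∧ K' ≠ K ∧ (K' ∩ K).Nonempty}.ncard = n}

/-- Maximum degree. -/
noncomputable def maxDeg (H : SimpleGraph W) : ℕ :=
  sSup {n | ∃ v, (H.neighborSet v).ncard = n}

/-- Clique number. -/
noncomputable def cliqueNum (H : SimpleGraph W) : ℕ :=
  sSup {n | ∃ K : Set W, H.IsClique K ∧ K.ncard = n}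

/-- A separation of a graph. -/
def IsSep (H : SimpleGraph W) (A B : Set W) : Prop :=
  A ∪ B = Set.univ ∧ ∀ a ∈ A \ B, ∀ b ∈ B \ A, ¬ H.Adj a b

/-- A tree-decomposition. -/
structure TreeDec {ι : Type} (G : SimpleGraph V) (T : SimpleGraph ι) (β : ι → Set V) : Prop where
  tree : T.IsTree
  cover : ∀ v, ∃ t, v ∈ β t
  edges : ∀ v w, G.Adj v w → ∃ t, v ∈ β t ∧ w ∈ β t
  subtree : ∀ v, (T.induce {t | v ∈ β t}).Connected

/-- α-treewidth (tree-independence number). -/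
noncomputable def alphaTW (G : SimpleGraph V) : ℕ :=
  sInf {n | ∃ (ι : Type) (T : SimpleGraph ι) (β : ι → Set V), TreeDec G T β ∧
    ∀ t, ∀ S ⊆ β t, IndepSet G S → S.ncard ≤ n}

/-- Neighbourhood of a set of vertices (outside the set). -/
def setNbhd (G : SimpleGraph V) (K : Set V) : Set V :=
  {v | v ∉ K ∧ ∃ x ∈ K, G.Adj v x}

/-- Diversity number of a set `K`: max size of a `K`-diverse set of neighbours. -/
noncomputable def dn (G : SimpleGraph V) (K : Set V) : ℕ :=
  sSup {n | ∃ Y ⊆ setNbhd G K,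
    (∀ y1 ∈ Y, ∀ y2 ∈ Y, y1 ≠ y2 → G.neighborSet y1 ∩ K ≠ G.neighborSet y2 ∩ K) ∧ Y.ncard = n}

/-- Cutrank of a set of vertices: F₂-rank of the corresponding submatrix
of the adjacency matrix. -/
noncomputable def cutrank (G : SimpleGraph V) [Fintype V] (X : Set V) : ℕ :=
  haveI : DecidableRel G.Adj := Classical.decRel _
  haveI : Fintype ↥X := Fintype.ofFinite _
  haveI : Fintype ↥(Xᶜ) := Fintype.ofFinite _
  (Matrix.of fun (x : ↥X) (y : ↥(Xᶜ)) => if G.Adj x.1 y.1 then (1 : ZMod 2) else 0).rank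

/-- `G` admits a rank-decomposition of width at most `w`: a tree whose internal
nodes have degree 3, whose leaves are in bijection with `V(G)`, such that every
edge induces a bipartition of the vertices of cutrank at most `w`. -/
def HasRankDecompOfWidth (G : SimpleGraph V) [Fintype V] (w : ℕ) : Prop :=
  ∃ (ι : Type) (T : SimpleGraph ι) (δ : V → ι),
    T.IsTree ∧ Function.Injective δ ∧
    (∀ t, (T.neighborSet t).ncard = 1 ↔ ∃ v, δ v = t) ∧
    (∀ t, (T.neighborSet t).ncard = 1 ∨ (T.neighborSet t).ncard = 3) ∧
    ∀ a b, T.Adj a b → cutrank G {v | (T.deleteEdges {s(a,b)}).Reachable (δ v) a} ≤ w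

/-- An injective enumeration of a path that is induced in `G`. -/
def IsInducedPath (G : SimpleGraph V) {ℓ : ℕ} (x : Fin ℓ → V) : Prop :=
  Function.Injective x ∧ ∀ i j, G.Adj (x i) (x j) ↔ (i.val + 1 = j.val ∨ j.val + 1 = i.val)

lemma exists_maxclique [Fintype V] (G : SimpleGraph V) {S : Set V} (hS : G.IsClique S) :
    ∃ K, MaxClique G K ∧ S ⊆ K := by
  classical
  have hfin : ({K : Set V | G.IsClique K ∧ S ⊆ K}).Finite := Set.toFinite _
  obtain ⟨K, hK, hmax⟩ := Set.Finite.exists_maximalFor Set.ncard _ hfin ⟨S, hS, subset_rfl⟩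
  refine ⟨K, ⟨hK.1, ?_⟩, hK.2⟩
  intro K' hK' hsub
  have hmem : K' ∈ {K : Set V | G.IsClique K ∧ S ⊆ K} := ⟨hK', hK.2.trans hsub⟩
  have hle : K.ncard ≤ K'.ncard := Set.ncard_le_ncard hsub (Set.toFinite _)
  have heq := hmax hmem hle
  exact (Set.eq_of_subset_of_ncard_le hsub heq.ge (Set.toFinite _)).symm

lemma my_ncard_biUnion_le {α β : Type*} [Finite β] {s : Set α} (hs : s.Finite)
    (f : α → Set β) (m : ℕ) (h : ∀ x ∈ s, (f x).ncard ≤ m) :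
    (⋃ x ∈ s, f x).ncard ≤ s.ncard * m := by
  revert h
  refine Set.Finite.induction_on (motive := fun s _ => (∀ x ∈ s, (f x).ncard ≤ m) →
      (⋃ x ∈ s, f x).ncard ≤ s.ncard * m) s hs (by simp) ?_
  intro a s' ha hs' ih h
  rw [Set.biUnion_insert, Set.ncard_insert_of_notMem ha hs']
  calc (f a ∪ ⋃ x ∈ s', f x).ncard ≤ (f a).ncard + (⋃ x ∈ s', f x).ncard :=
        Set.ncard_union_le _ _
    _ ≤ m + s'.ncard * m := by
        exact Nat.add_le_add (h a (Set.mem_insert _ _))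
          (ih (fun x hx => h x (Set.mem_insert_of_mem _ hx)))
    _ = (s'.ncard + 1) * m := by ring

theorem stmt7 [Fintype V] (G : SimpleGraph V) :
    maxDeg (quotGraph G) ≤ cideg G * (cliqueIncDiv G - 1) := by
  classical
  apply csSup_le'
  rintro n ⟨a, rfl⟩
  obtain ⟨v, rfl⟩ := Quotient.exists_rep a
  set 𝒦 : Set (Set V) := {K | MaxClique G K ∧ v ∈ K} with h𝒦
  -- each maximal clique through v contributes at most cliqueIncDiv G - 1 classes ≠ ⟦v⟧
  have hdivK : ∀ K ∈ 𝒦, (qmk G '' K \ {Quotient.mk (twinSetoid G) v}).ncard ≤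
      cliqueIncDiv G - 1 := by
    intro K hK
    have hvmem : Quotient.mk (twinSetoid G) v ∈ qmk G '' K := ⟨v, hK.2, rfl⟩
    rw [Set.ncard_diff_singleton_of_mem hvmem]
    have hle : (qmk G '' K).ncard ≤ cliqueIncDiv G := by
      have hsub : {n | ∃ K, MaxClique G K ∧ (qmk G '' K).ncard = n} ⊆
          Set.range (fun K : Set V => (qmk G '' K).ncard) := by
        rintro n ⟨K, _, rfl⟩; exact ⟨K, rfl⟩
      exact le_csSup (((Set.finite_range _).subset hsub).bddAbove) ⟨K, hK.1, rfl⟩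
    exact Nat.sub_le_sub_right hle 1
  -- the neighborhood is covered by these contributions
  have hsubN : (quotGraph G).neighborSet (Quotient.mk (twinSetoid G) v) ⊆
      ⋃ K ∈ 𝒦, (qmk G '' K \ {Quotient.mk (twinSetoid G) v}) := by
    intro b hb
    obtain ⟨hne, x, y, hx, hy, hxy⟩ := hb
    have htw : twin G x v := Quotient.eq.mp hx
    have hvy : G.Adj v y := by
      have := (htw y).mp (Or.inl hxy)
      rcases this with h | rfl
      · exact h
      · exact absurd hy hne
    have hcl : G.IsClique {v, y} :=
      by haveI : Std.Symm G.Adj := G.symm; exact Set.pairwise_pair_of_symmetric.mpr (fun _ => hvy)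
    obtain ⟨K, hK, hSK⟩ := exists_maxclique G hcl
    refine Set.mem_biUnion (show K ∈ 𝒦 from ⟨hK, hSK (Set.mem_insert _ _)⟩) ?_
    refine ⟨⟨y, hSK (Set.mem_insert_of_mem _ rfl), hy⟩, ?_⟩
    simp only [Set.mem_singleton_iff]
    exact fun h => hne h.symm
  -- bound on the number of maximal cliques through v
  have hcideg : 𝒦.ncard ≤ cideg G := by
    have hsub : {n | ∃ v, {K | MaxClique G K ∧ v ∈ K}.ncard = n} ⊆
        Set.range (fun v : V => {K | MaxClique G K ∧ v ∈ K}.ncard) := by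
      rintro n ⟨v, rfl⟩; exact ⟨v, rfl⟩
    exact le_csSup (((Set.finite_range _).subset hsub).bddAbove) ⟨v, rfl⟩
  calc ((quotGraph G).neighborSet (Quotient.mk (twinSetoid G) v)).ncard
      ≤ (⋃ K ∈ 𝒦, (qmk G '' K \ {Quotient.mk (twinSetoid G) v})).ncard :=
        Set.ncard_le_ncard hsubN (Set.toFinite _)
    _ ≤ 𝒦.ncard * (cliqueIncDiv G - 1) :=
        my_ncard_biUnion_le (Set.toFinite _) _ _ hdivK
    _ ≤ cideg G * (cliqueIncDiv G - 1) := Nat.mul_le_mul_right _ hcideg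
end

section
/- For every graph G, the maximum degree of the true-twin quotient graph G̃ satisfies Δ(G̃) ≤ α_loc(G)^{ω̃(G)}, where α_loc(G) is the local independence number and ω̃(G) = ω(G̃) is the clique-incidence-diversity. -/
variable {V : Type} {W : Type}

section AuxTwin

variable {G : SimpleGraph V}

lemma qmk_out (q : Quotient (twinSetoid G)) : qmk G q.out = q := Quotient.out_eq q

lemma adj_of_quot_adj {x y : V} (h : (quotGraph G).Adj (qmk G x) (qmk G y)) : G.Adj x y := by
  obtain ⟨hne, x', y', hx', hy', hadj⟩ := h
  have tx : twin G x' x := Quotient.exact hx'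
  have ty : twin G y' y := Quotient.exact hy'
  rcases (tx y').mp (Or.inl hadj) with h1 | rfl
  · rcases (ty x).mp (Or.inl h1.symm) with h2 | rfl
    · exact h2.symm
    · exact absurd rfl hne
  · exact absurd hy' hne

lemma quot_adj_of_adj {x y : V} (h : G.Adj x y) (hne : qmk G x ≠ qmk G y) :
    (quotGraph G).Adj (qmk G x) (qmk G y) := ⟨hne, x, y, rfl, rfl, h⟩

lemma ncard_le_card_V [Finite V] (S : Set V) : S.ncard ≤ Nat.card V := by
  simpa [Set.ncard_univ] using Set.ncard_le_ncard (Set.subset_univ S) Set.finite_univ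

lemma le_alphaLoc [Finite V] (v : V) (S : Set V) (hS : S ⊆ cNbhd G v)
    (hI : IndepSet G S) : S.ncard ≤ alphaLoc G := by
  refine le_csSup ⟨Nat.card V, ?_⟩ ⟨v, S, hS, hI, rfl⟩
  rintro n ⟨u, T, -, -, rfl⟩
  exact ncard_le_card_V T

lemma exists_maxClique [Finite V] {C : Set V} (hC : G.IsClique C) :
    ∃ K, MaxClique G K ∧ C ⊆ K := by
  have hbdd : BddAbove {n | ∃ K, G.IsClique K ∧ C ⊆ K ∧ K.ncard = n} := by
    refine ⟨Nat.card V, ?_⟩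
    rintro n ⟨K, -, -, rfl⟩
    exact ncard_le_card_V K
  have hne : Set.Nonempty {n | ∃ K, G.IsClique K ∧ C ⊆ K ∧ K.ncard = n} :=
    ⟨C.ncard, C, hC, subset_rfl, rfl⟩
  obtain ⟨K, hK, hCK, hKcard⟩ := Nat.sSup_mem hne hbdd
  refine ⟨K, ⟨hK, ?_⟩, hCK⟩
  intro K' hK' hKK'
  have hle : K'.ncard ≤ K.ncard := by
    rw [hKcard]; exact le_csSup hbdd ⟨K', hK', hCK.trans hKK', rfl⟩
  exact (Set.eq_of_subset_of_ncard_le hKK' hle K'.toFinite).symm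

lemma le_cliqueIncDiv [Finite V] {K : Set V} (hK : MaxClique G K) :
    (qmk G '' K).ncard ≤ cliqueIncDiv G := by
  haveI : Finite (Quotient (twinSetoid G)) := Quotient.finite _
  refine le_csSup ⟨Nat.card (Quotient (twinSetoid G)), ?_⟩ ⟨K, hK, rfl⟩
  rintro n ⟨K', -, rfl⟩
  exact ncard_le_card_V _

end AuxTwin

/-- Counting bound for graphs with bounded clique and independence numbers. -/
def phiB (p q : ℕ) : ℕ := if p = 0 then 0 else if p = 1 then q else p ^ (q + 1)

lemma phiB_zero (q : ℕ) : phiB 0 q = 0 := rfl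

lemma phiB_one (q : ℕ) : phiB 1 q = q := rfl

lemma phiB_of_two_le {p : ℕ} (hp : 2 ≤ p) (q : ℕ) : phiB p q = p ^ (q + 1) := by
  unfold phiB
  rw [if_neg (by omega), if_neg (by omega)]

lemma phiB_rec {p q : ℕ} (hp : 1 ≤ p) (hq : 1 ≤ q) :
    1 + phiB p (q - 1) + phiB (p - 1) q ≤ phiB p q := by
  obtain ⟨q, rfl⟩ : ∃ q', q = q' + 1 := ⟨q - 1, (Nat.succ_pred_eq_of_pos hq).symm⟩
  simp only [Nat.add_sub_cancel]
  match p, hp with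
  | 1, _ => rw [show (1:ℕ) - 1 = 0 from rfl, phiB_one, phiB_one, phiB_zero]; omega
  | 2, _ =>
    rw [phiB_of_two_le le_rfl, phiB_of_two_le le_rfl, show (2:ℕ) - 1 = 1 from rfl, phiB_one]
    have h2 : q + 2 ≤ 2 ^ (q + 1) := Nat.lt_two_pow_self (n := q + 1)
    have h3 : (2:ℕ) ^ (q + 1 + 1) = 2 ^ (q + 1) + 2 ^ (q + 1) := by ring
    omega
  | (p + 3), _ =>
    rw [phiB_of_two_le (by omega), phiB_of_two_le (by omega),
      show p + 3 - 1 = p + 2 from rfl, phiB_of_two_le (by omega)]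
    have hlt : (p + 2) ^ (q + 1) + 1 ≤ (p + 3) ^ (q + 1) :=
      Nat.pow_lt_pow_left (by omega) (by omega)
    have e1 : (p + 3) ^ (q + 1 + 1) = (p + 3) ^ (q + 1) * (p + 3) := by ring
    have e2 : (p + 2) ^ (q + 1 + 1) = (p + 2) ^ (q + 1) * (p + 2) := by ring
    nlinarith [hlt, pow_pos (show 0 < p + 2 by omega) (q + 1)]

lemma count_bound {W : Type} (H : SimpleGraph W) :
    ∀ (n p q : ℕ) (D : Set W), D.Finite → D.ncard ≤ n →
      (∀ S ⊆ D, IndepSet H S → S.ncard ≤ p) →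
      (∀ C ⊆ D, H.IsClique C → C.ncard ≤ q) →
      D.ncard ≤ phiB p q := by
  intro n
  induction n with
  | zero =>
    intro p q D _ hle _ _
    exact hle.trans (Nat.zero_le _)
  | succ n ih =>
    intro p q D hfin hle hind hclq
    rcases D.eq_empty_or_nonempty with rfl | ⟨x, hx⟩
    · simp
    have hxI : IndepSet H {x} := by
      intro a ha b hb hadj
      simp only [Set.mem_singleton_iff] at ha hb
      subst ha; subst hb; exact H.irrefl hadj
    have hp : 1 ≤ p := by
      simpa using hind {x} (Set.singleton_subset_iff.2 hx) hxI
    have hq : 1 ≤ q := by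
      simpa using hclq {x} (Set.singleton_subset_iff.2 hx)
        (by simp [SimpleGraph.isClique_iff, Set.pairwise_singleton])
    set A : Set W := {y | y ∈ D ∧ H.Adj x y} with hAdef
    set B : Set W := {y | y ∈ D ∧ y ≠ x ∧ ¬ H.Adj x y} with hBdef
    have hAD : A ⊆ D := fun y hy => hy.1
    have hBD : B ⊆ D := fun y hy => hy.1
    have hAfin : A.Finite := hfin.subset hAD
    have hBfin : B.Finite := hfin.subset hBD
    have hxA : x ∉ A := fun h => H.irrefl h.2
    have hxB : x ∉ B := fun h => h.2.1 rfl
    have hAn : A.ncard ≤ n := by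
      have : A.ncard < D.ncard :=
        Set.ncard_lt_ncard ⟨hAD, fun hsub => hxA (hsub hx)⟩ hfin
      omega
    have hBn : B.ncard ≤ n := by
      have : B.ncard < D.ncard :=
        Set.ncard_lt_ncard ⟨hBD, fun hsub => hxB (hsub hx)⟩ hfin
      omega
    have hA : A.ncard ≤ phiB p (q - 1) := by
      refine ih p (q - 1) A hAfin hAn (fun S hS hSI => hind S (hS.trans hAD) hSI) ?_
      intro C hCA hC
      have hxC : x ∉ C := fun h => hxA (hCA h)
      have hCfin : C.Finite := hAfin.subset hCA
      have hins : H.IsClique (insert x C) :=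
        hC.insert (fun b hb _ => (hCA hb).2)
      have := hclq (insert x C) ?_ hins
      · rw [Set.ncard_insert_of_notMem hxC hCfin] at this
        omega
      · exact Set.insert_subset hx (hCA.trans hAD)
    have hB : B.ncard ≤ phiB (p - 1) q := by
      refine ih (p - 1) q B hBfin hBn ?_ (fun C hC hCI => hclq C (hC.trans hBD) hCI)
      intro S hSB hSI
      have hxS : x ∉ S := fun h => hxB (hSB h)
      have hSfin : S.Finite := hBfin.subset hSB
      have hins : IndepSet H (insert x S) := by
        intro a ha b hb hadj
        rcases ha with rfl | ha
        · rcases hb with rfl | hb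
          · exact H.irrefl hadj
          · exact (hSB hb).2.2 hadj
        · rcases hb with rfl | hb
          · exact (hSB ha).2.2 hadj.symm
          · exact hSI a ha b hb hadj
      have := hind (insert x S) (Set.insert_subset hx (hSB.trans hBD)) hins
      rw [Set.ncard_insert_of_notMem hxS hSfin] at this
      omega
    have hDsub : D ⊆ insert x (A ∪ B) := by
      intro y hy
      by_cases hyx : y = x
      · exact Or.inl hyx
      · by_cases hadj : H.Adj x y
        · exact Or.inr (Or.inl ⟨hy, hadj⟩)
        · exact Or.inr (Or.inr ⟨hy, hyx, hadj⟩)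
    have hcard : D.ncard ≤ 1 + A.ncard + B.ncard := by
      calc D.ncard ≤ (insert x (A ∪ B)).ncard :=
            Set.ncard_le_ncard hDsub (((hAfin.union hBfin)).insert x)
        _ ≤ (A ∪ B).ncard + 1 := Set.ncard_insert_le x _
        _ ≤ A.ncard + B.ncard + 1 := by
            have := Set.ncard_union_le A B; omega
        _ = 1 + A.ncard + B.ncard := by omega
    calc D.ncard ≤ 1 + A.ncard + B.ncard := hcard
      _ ≤ 1 + phiB p (q - 1) + phiB (p - 1) q := by omega
      _ ≤ phiB p q := phiB_rec hp hq
theorem stmt10 [Fintype V] (G : SimpleGraph V) :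
    maxDeg (quotGraph G) ≤ alphaLoc G ^ cliqueIncDiv G := by
  apply csSup_le'
  rintro n ⟨c, rfl⟩
  haveI : Finite (Quotient (twinSetoid G)) := Quotient.finite _
  set a := alphaLoc G with ha
  set w := cliqueIncDiv G with hw
  set D := (quotGraph G).neighborSet c with hDdef
  have hDfin : D.Finite := Set.toFinite _
  set v := Quotient.out c with hv
  have hvc : qmk G v = c := Quotient.out_eq c
  have hrep : ∀ q ∈ D, G.Adj v q.out := by
    intro q hq
    apply adj_of_quot_adj
    rw [hvc, qmk_out]
    exact hq
  have hind : ∀ S ⊆ D, IndepSet (quotGraph G) S → S.ncard ≤ a := by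
    intro S hSD hS
    have hinj : Set.InjOn Quotient.out S := fun x _ y _ h => Quotient.out_injective h
    have himg : Quotient.out '' S ⊆ cNbhd G v := by
      rintro _ ⟨q, hq, rfl⟩
      exact Set.mem_insert_of_mem _ (hrep q (hSD hq))
    have hI : IndepSet G (Quotient.out '' S) := by
      rintro _ ⟨q, hq, rfl⟩ _ ⟨q', hq', rfl⟩ hadj
      by_cases hqq : q = q'
      · subst hqq; exact G.irrefl hadj
      · refine hS q hq q' hq' ?_
        have h2 := quot_adj_of_adj hadj (by rw [qmk_out, qmk_out]; exact hqq)
        rwa [qmk_out, qmk_out] at h2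
    calc S.ncard = (Quotient.out '' S).ncard := (Set.ncard_image_of_injOn hinj).symm
      _ ≤ a := le_alphaLoc v _ himg hI
  have hclq : ∀ C ⊆ D, (quotGraph G).IsClique C → C.ncard + 1 ≤ w := by
    intro C hCD hC
    have himgcl : G.IsClique (Quotient.out '' C) := by
      rintro _ ⟨q, hq, rfl⟩ _ ⟨q', hq', rfl⟩ hne
      have hqq' : q ≠ q' := fun e => hne (by rw [e])
      have h2 := hC hq hq' hqq'
      apply adj_of_quot_adj
      rwa [qmk_out, qmk_out]
    have hcl : G.IsClique (insert v (Quotient.out '' C)) := by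
      refine himgcl.insert (fun b hb _ => ?_)
      obtain ⟨q, hq, rfl⟩ := hb
      exact hrep q (hCD hq)
    obtain ⟨K, hK, hsub⟩ := exists_maxClique hcl
    have h1 : insert c C ⊆ qmk G '' K := by
      intro q hq
      rcases hq with rfl | hq
      · exact ⟨v, hsub (Set.mem_insert _ _), hvc⟩
      · exact ⟨q.out, hsub (Set.mem_insert_of_mem _ (Set.mem_image_of_mem _ hq)),
          qmk_out q⟩
    have hcC : c ∉ C := fun hc => (quotGraph G).irrefl (hCD hc)
    have h2 : (insert c C).ncard = C.ncard + 1 :=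
      Set.ncard_insert_of_notMem hcC (Set.toFinite _)
    calc C.ncard + 1 = (insert c C).ncard := h2.symm
      _ ≤ (qmk G '' K).ncard := Set.ncard_le_ncard h1 (Set.toFinite _)
      _ ≤ w := le_cliqueIncDiv hK
  have hw1 : 1 ≤ w := by
    have h0 := hclq ∅ (Set.empty_subset _) (by simp)
    simpa using h0
  by_cases ha0 : a = 0
  · have hD0 : D = ∅ := by
      rw [Set.eq_empty_iff_forall_notMem]
      intro x hxD
      have h1 : (1:ℕ) ≤ a := by
        have hxI : IndepSet (quotGraph G) {x} := by
          intro p hp q hq hadj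
          simp only [Set.mem_singleton_iff] at hp hq
          subst hp; subst hq; exact (quotGraph G).irrefl hadj
        simpa using hind {x} (Set.singleton_subset_iff.2 hxD) hxI
      omega
    rw [hD0]
    simp
  by_cases ha1 : a = 1
  · have hone : ∀ q ∈ D, ∀ q' ∈ D, q = q' := by
      intro q hq q' hq'
      by_contra hne
      have hout : q.out ≠ q'.out := fun e => hne (Quotient.out_injective e)
      have key : ∃ u : V, ∃ S ⊆ cNbhd G u, IndepSet G S ∧ S.ncard = 2 := by
        by_cases hadj : G.Adj q.out q'.out
        · have hnt : ¬ twin G q.out q'.out := fun t => hne (by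
            rw [← qmk_out (G := G) q, ← qmk_out (G := G) q']
            exact Quotient.sound t)
          obtain ⟨z, hz⟩ := not_forall.mp hnt
          rcases Classical.em (G.Adj q.out z ∨ q.out = z) with hP | hP
          · have hQ : ¬ (G.Adj q'.out z ∨ q'.out = z) := fun h => hz ⟨fun _ => h, fun _ => hP⟩
            push_neg at hQ
            refine ⟨q.out, {z, q'.out}, ?_, ?_, Set.ncard_pair (fun e => hQ.2 e.symm)⟩
            · intro t ht
              rcases ht with rfl | ht
              · rcases hP with hP' | hP'
                · exact Set.mem_insert_of_mem _ hP'
                · exact Set.mem_insert_iff.2 (Or.inl hP'.symm)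
              · rw [Set.mem_singleton_iff] at ht; subst ht
                exact Set.mem_insert_of_mem _ hadj
            · intro x hx y hy hxy
              rcases hx with rfl | hx <;> rcases hy with rfl | hy
              · exact G.irrefl hxy
              · rw [Set.mem_singleton_iff] at hy; subst hy
                exact hQ.1 hxy.symm
              · rw [Set.mem_singleton_iff] at hx; subst hx
                exact hQ.1 hxy
              · rw [Set.mem_singleton_iff] at hx hy; subst hx; subst hy
                exact G.irrefl hxy
          · have hQ : G.Adj q'.out z ∨ q'.out = z := by
              by_contra hQ
              exact hz ⟨fun p => absurd p hP, fun p => absurd p hQ⟩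
            push_neg at hP
            refine ⟨q'.out, {z, q.out}, ?_, ?_, Set.ncard_pair (fun e => hP.2 e.symm)⟩
            · intro t ht
              rcases ht with rfl | ht
              · rcases hQ with hQ' | hQ'
                · exact Set.mem_insert_of_mem _ hQ'
                · exact Set.mem_insert_iff.2 (Or.inl hQ'.symm)
              · rw [Set.mem_singleton_iff] at ht; subst ht
                exact Set.mem_insert_of_mem _ hadj.symm
            · intro x hx y hy hxy
              rcases hx with rfl | hx <;> rcases hy with rfl | hy
              · exact G.irrefl hxy
              · rw [Set.mem_singleton_iff] at hy; subst hy
                exact hP.1 hxy.symm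
              · rw [Set.mem_singleton_iff] at hx; subst hx
                exact hP.1 hxy
              · rw [Set.mem_singleton_iff] at hx hy; subst hx; subst hy
                exact G.irrefl hxy
        · refine ⟨v, {q.out, q'.out}, ?_, ?_, Set.ncard_pair hout⟩
          · intro t ht
            rcases ht with rfl | ht
            · exact Set.mem_insert_of_mem _ (hrep q hq)
            · rw [Set.mem_singleton_iff] at ht; subst ht
              exact Set.mem_insert_of_mem _ (hrep q' hq')
          · intro x hx y hy hxy
            rcases hx with rfl | hx <;> rcases hy with rfl | hy
            · exact G.irrefl hxy
            · rw [Set.mem_singleton_iff] at hy; subst hy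
              exact hadj hxy
            · rw [Set.mem_singleton_iff] at hx; subst hx
              exact hadj hxy.symm
            · rw [Set.mem_singleton_iff] at hx hy; subst hx; subst hy
              exact G.irrefl hxy
      obtain ⟨u, S, hSu, hSI, hS2⟩ := key
      have h2 := le_alphaLoc u S hSu hSI
      omega
    have hD1 : D.ncard ≤ 1 := (Set.ncard_le_one hDfin).2 hone
    calc D.ncard ≤ 1 := hD1
      _ ≤ a ^ w := by rw [ha1, one_pow]
  · have ha2 : 2 ≤ a := by omega
    have hb := count_bound (quotGraph G) D.ncard a (w - 1) D hDfin le_rfl hind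
      (fun C hCD hC => by have h2 := hclq C hCD hC; omega)
    rw [phiB_of_two_le ha2] at hb
    have hww : w - 1 + 1 = w := by omega
    rwa [hww] at hb
end

section
/- Let G be a graph and let x₁x₂⋯x_ℓ be an induced path in G with ℓ ≥ 3 vertices. Then the sequence of true-twin equivalence classes x̃₁x̃₂⋯x̃_ℓ is an induced path in the quotient graph G̃ (in particular, no two vertices of the path are true twins). -/
variable {V : Type} {W : Type}

theorem stmt17 (G : SimpleGraph V) {l : ℕ} (hl : 3 ≤ l) (x : Fin l → V)
    (hx : IsInducedPath G x) :
    IsInducedPath (quotGraph G) (fun i => qmk G (x i)) := by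
  obtain ⟨hinj, hadj⟩ := hx
  -- characterization of adjacency in the quotient
  have quotAdj : ∀ a b : V, (quotGraph G).Adj (qmk G a) (qmk G b) ↔
      (qmk G a ≠ qmk G b ∧ G.Adj a b) := by
    intro a b
    constructor
    · rintro ⟨hne, x', y', hx', hy', hxy⟩
      refine ⟨hne, ?_⟩
      have ta : twin G x' a := Quotient.exact hx'
      have tb : twin G y' b := Quotient.exact hy'
      have h1 : G.Adj b x' ∨ b = x' := (tb x').mp (Or.inl hxy.symm)
      have h2 : G.Adj x' b ∨ x' = b := by
        rcases h1 with h | h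
        · exact Or.inl h.symm
        · exact Or.inr h.symm
      have h3 : G.Adj a b ∨ a = b := (ta b).mp h2
      rcases h3 with h | h
      · exact h
      · exact absurd (by rw [h]) hne
    · rintro ⟨hne, h⟩
      exact ⟨hne, a, b, rfl, rfl, h⟩
  -- no two path vertices in consecutive order are twins
  have aux : ∀ i j : Fin l, i.val + 1 = j.val → ¬ twin G (x i) (x j) := by
    intro i j hij htw
    by_cases hlt : j.val + 1 < l
    · set k : Fin l := ⟨j.val + 1, hlt⟩ with hk
      have hjk : G.Adj (x j) (x k) := (hadj j k).mpr (Or.inl rfl)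
      have hik : ¬ G.Adj (x i) (x k) := by
        rw [hadj i k]; simp only [hk]; omega
      have hne : x i ≠ x k := fun h => by
        have := hinj h; simp [hk, Fin.ext_iff] at this; omega
      have := (htw (x k)).mpr (Or.inl hjk)
      rcases this with h | h
      · exact hik h
      · exact hne h
    · -- j is the last vertex; use the vertex before i
      have hi1 : 1 ≤ i.val := by have := j.isLt; omega
      set k : Fin l := ⟨i.val - 1, by omega⟩ with hk
      have hki : G.Adj (x i) (x k) := (hadj i k).mpr (Or.inr (by simp [hk]; omega))
      have hjk : ¬ G.Adj (x j) (x k) := by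
        rw [hadj j k]; simp only [hk]; omega
      have hne : x j ≠ x k := fun h => by
        have := hinj h; simp [hk, Fin.ext_iff] at this; omega
      have := (htw (x k)).mp (Or.inl hki)
      rcases this with h | h
      · exact hjk h
      · exact hne h
  -- injectivity of the quotient path
  have qinj : ∀ i j : Fin l, qmk G (x i) = qmk G (x j) → i = j := by
    intro i j h
    by_contra hne
    have htw : twin G (x i) (x j) := Quotient.exact h
    have hxne : x i ≠ x j := fun h' => hne (hinj h')
    have hadj' : G.Adj (x i) (x j) := by
      rcases (htw (x j)).mpr (Or.inr rfl) with h' | h'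
      · exact h'
      · exact absurd h' hxne
    rcases (hadj i j).mp hadj' with h' | h'
    · exact aux i j h' htw
    · exact aux j i h' (fun z => (htw z).symm)
  constructor
  · intro i j h
    exact qinj i j h
  · intro i j
    rw [quotAdj]
    constructor
    · rintro ⟨_, h⟩
      exact (hadj i j).mp h
    · intro h
      have hij : i ≠ j := by rcases h with h | h <;> (intro he; rw [he] at h; omega)
      refine ⟨fun he => hij (qinj i j he), (hadj i j).mpr h⟩
end
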